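/- If α : H × N → N is compatible with some admissible H-indexed equivalence relation E, then α is also compatible with the coarse equivalence relation E_α defined by n ∼_α^h n' iff ∀ x,y ∈ H, x·h·y = 1 → α(x,n) = α(x,n'); moreover E_α is admissible and is the largest equivalence relation compatible with α. Consequently, the set of equivalence relations compatible with a valid α forms a complete lattice. -/
import Mathlib


/-- An admissible H-indexed equivalence relation on N: each ∼^h is an equivalence relation,
∼^1 is equality, left multiplication preserves ∼^h, and n ∼^h n' implies n ∼^{h·y} n'. -/
def IsAdmissible {H N : Type*} [Monoid H] [Monoid N] (r : H → N → N → Prop) : Prop :=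
  (∀ h : H, Equivalence (r h)) ∧
  (∀ n n' : N, r 1 n n' → n = n') ∧
  (∀ (h : H) (n n' x : N), r h n n' → r h (x * n) (x * n')) ∧
  (∀ (h : H) (n n' : N) (y : H), r h n n' → r (h * y) n n')

/-- α : H × N → N is a compatible action for the H-indexed equivalence relation r
(the six conditions of a compatible action). -/
def IsCompatibleAction {H N : Type*} [Monoid H] [Monoid N] (r : H → N → N → Prop)
    (α : H → N → N) : Prop :=
  (∀ (h : H) (n n' x : N), r h n n' → r h (n * α h x) (n' * α h x)) ∧
  (∀ (h : H) (n n' : N) (x : H), r h n n' → r (x * h) (α x n) (α x n')) ∧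
  (∀ (h : H) (n n' : N), r h (α h (n * n')) (α h n * α h n')) ∧
  (∀ (h h' : H) (n : N), r (h * h') (α (h * h') n) (α h (α h' n))) ∧
  (∀ h : H, r h (α h 1) 1) ∧
  (∀ n : N, r 1 (α 1 n) n)

section Aux
variable {H N : Type*} [Monoid H] [Monoid N]

/-- The coarse relation E_α. -/
def Ecoarse (α : H → N → N) : H → N → N → Prop :=
  fun h n n' => ∀ x y : H, x * h * y = 1 → α x n = α x n'

/-- If x has a right inverse, e x collapses to equality. -/
lemma collapse {e : H → N → N → Prop} (hadm : IsAdmissible e)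
    {x z : H} (hxz : x * z = 1) {a b : N} (hab : e x a b) : a = b :=
  hadm.2.1 a b (hxz ▸ hadm.2.2.2 x a b z hab)

lemma collapse' {e : H → N → N → Prop} (hadm : IsAdmissible e)
    {x h y : H} (hxy : x * h * y = 1) {a b : N} (hab : e x a b) : a = b :=
  collapse hadm (show x * (h * y) = 1 by rw [← mul_assoc]; exact hxy) hab

lemma Ecoarse_largest {α : H → N → N} {e : H → N → N → Prop}
    (hadm : IsAdmissible e) (hcomp : IsCompatibleAction e α)
    {h : H} {n n' : N} (hr : e h n n') : Ecoarse α h n n' :=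
  fun x y hxy => collapse hadm hxy (hcomp.2.1 h n n' x hr)

lemma Ecoarse_admissible {α : H → N → N} {e : H → N → N → Prop}
    (hadm : IsAdmissible e) (hcomp : IsCompatibleAction e α) :
    IsAdmissible (Ecoarse α) := by
  obtain ⟨heq, hone, hmul, hext⟩ := hadm
  obtain ⟨c1, c2, c3, c4, c5, c6⟩ := hcomp
  refine ⟨fun h => ⟨fun n x y _ => rfl, fun hr x y hxy => (hr x y hxy).symm,
      fun hr hr' x y hxy => (hr x y hxy).trans (hr' x y hxy)⟩, ?_, ?_, ?_⟩
  · intro n n' hr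
    have h1 : α 1 n = α 1 n' := hr 1 1 (by simp)
    have a1 : α 1 n = n := hone _ _ (c6 n)
    have a2 : α 1 n' = n' := hone _ _ (c6 n')
    rw [← a1, ← a2, h1]
  · intro h n n' x hr x0 y hxy
    have e1 : e x0 (α x0 (x * n)) (α x0 x * α x0 n) := c3 x0 x n
    have e2 : e x0 (α x0 (x * n')) (α x0 x * α x0 n') := c3 x0 x n'
    have h1 : α x0 (x * n) = α x0 x * α x0 n :=
      collapse' ⟨heq, hone, hmul, hext⟩ hxy e1
    have h2 : α x0 (x * n') = α x0 x * α x0 n' :=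
      collapse' ⟨heq, hone, hmul, hext⟩ hxy e2
    rw [h1, h2, hr x0 y hxy]
  · intro h n n' y hr x z hxz
    exact hr x (y * z) (by simp only [mul_assoc] at hxz ⊢; exact hxz)

lemma Ecoarse_compatible {α : H → N → N} {e : H → N → N → Prop}
    (hadm : IsAdmissible e) (hcomp : IsCompatibleAction e α) :
    IsCompatibleAction (Ecoarse α) α := by
  obtain ⟨c1, c2, c3, c4, c5, c6⟩ := hcomp
  have hc : IsCompatibleAction e α := ⟨c1, c2, c3, c4, c5, c6⟩
  refine ⟨?_, ?_, ?_, ?_, ?_, ?_⟩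
  · -- right multiplication by α h x
    intro h n n' x hr x0 y hxy
    have h1 : α x0 (n * α h x) = α x0 n * α x0 (α h x) :=
      collapse' hadm hxy (c3 x0 n (α h x))
    have h2 : α x0 (n' * α h x) = α x0 n' * α x0 (α h x) :=
      collapse' hadm hxy (c3 x0 n' (α h x))
    rw [h1, h2, hr x0 y hxy]
  · -- action
    intro h n n' x hr x0 y hxy
    have hxy' : x0 * x * h * y = 1 := by
      simp only [mul_assoc] at hxy ⊢; exact hxy
    have h1 : α (x0 * x) n = α x0 (α x n) :=
      collapse' hadm hxy' (c4 x0 x n)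
    have h2 : α (x0 * x) n' = α x0 (α x n') :=
      collapse' hadm hxy' (c4 x0 x n')
    rw [← h1, ← h2]
    exact hr (x0 * x) y hxy'
  · -- multiplicativity
    intro h n n' x y hxy
    have k1 : α x (α h (n * n')) = α (x * h) (n * n') :=
      (collapse hadm hxy (c4 x h (n * n'))).symm
    have k2 : α (x * h) (n * n') = α (x * h) n * α (x * h) n' :=
      collapse hadm hxy (c3 (x * h) n n')
    have k3 : α x (α h n) = α (x * h) n := (collapse hadm hxy (c4 x h n)).symm
    have k4 : α x (α h n') = α (x * h) n' := (collapse hadm hxy (c4 x h n')).symm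
    have k5 : α x (α h n * α h n') = α x (α h n) * α x (α h n') :=
      collapse' hadm hxy (c3 x (α h n) (α h n'))
    rw [k1, k2, k5, k3, k4]
  · -- cocycle
    intro h h' n x y hxy
    have hxy1 : x * (h * h') * y = 1 := hxy
    have k1 : α x (α (h * h') n) = α (x * (h * h')) n :=
      (collapse hadm hxy1 (c4 x (h * h') n)).symm
    have hb : x * h * (h' * y) = 1 := by
      simp only [mul_assoc] at hxy ⊢; exact hxy
    have hc3 : x * h * h' * y = 1 := by
      simp only [mul_assoc] at hxy ⊢; exact hxy
    have k2 : α x (α h (α h' n)) = α (x * h) (α h' n) :=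
      (collapse hadm hb (c4 x h (α h' n))).symm
    have k3 : α (x * h) (α h' n) = α (x * h * h') n :=
      (collapse hadm hc3 (c4 (x * h) h' n)).symm
    rw [k1, k2, k3, ← mul_assoc]
  · -- unit of N
    intro h x y hxy
    have k1 : α x (α h 1) = α (x * h) 1 := (collapse hadm hxy (c4 x h 1)).symm
    have k2 : α (x * h) 1 = 1 := collapse hadm hxy (c5 (x * h))
    have k3 : α x 1 = 1 := collapse' hadm hxy (c5 x)
    rw [k1, k2, k3]
  · -- unit of H
    intro n x y hxy
    have hxy' : x * 1 * y = 1 := hxy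
    have k1 : α x (α 1 n) = α (x * 1) n := (collapse hadm hxy' (c4 x 1 n)).symm
    rw [k1, mul_one]

end Aux

section Lattice
variable {H N : Type*} [Monoid H] [Monoid N]

lemma inter_admissible {α : H → N → N} (hE : IsAdmissible (Ecoarse α))
    (S : Set {r : H → N → N → Prop // IsAdmissible r ∧ IsCompatibleAction r α}) :
    IsAdmissible (fun h n n' => Ecoarse α h n n' ∧ ∀ r ∈ S, r.1 h n n') := by
  refine ⟨fun h => ⟨fun n => ⟨(hE.1 h).refl n, fun r _ => (r.2.1.1 h).refl n⟩,
      fun hr => ⟨(hE.1 h).symm hr.1, fun r hrS => (r.2.1.1 h).symm (hr.2 r hrS)⟩,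
      fun hr hr' => ⟨(hE.1 h).trans hr.1 hr'.1,
        fun r hrS => (r.2.1.1 h).trans (hr.2 r hrS) (hr'.2 r hrS)⟩⟩,
    fun n n' hr => hE.2.1 n n' hr.1,
    fun h n n' x hr => ⟨hE.2.2.1 h n n' x hr.1,
      fun r hrS => r.2.1.2.2.1 h n n' x (hr.2 r hrS)⟩,
    fun h n n' y hr => ⟨hE.2.2.2 h n n' y hr.1,
      fun r hrS => r.2.1.2.2.2 h n n' y (hr.2 r hrS)⟩⟩

lemma inter_compatible {α : H → N → N} (hEc : IsCompatibleAction (Ecoarse α) α)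
    (S : Set {r : H → N → N → Prop // IsAdmissible r ∧ IsCompatibleAction r α}) :
    IsCompatibleAction (fun h n n' => Ecoarse α h n n' ∧ ∀ r ∈ S, r.1 h n n') α :=
  ⟨fun h n n' x hr => ⟨hEc.1 h n n' x hr.1, fun r hrS => r.2.2.1 h n n' x (hr.2 r hrS)⟩,
   fun h n n' x hr => ⟨hEc.2.1 h n n' x hr.1, fun r hrS => r.2.2.2.1 h n n' x (hr.2 r hrS)⟩,
   fun h n n' => ⟨hEc.2.2.1 h n n', fun r _ => r.2.2.2.2.1 h n n'⟩,
   fun h h' n => ⟨hEc.2.2.2.1 h h' n, fun r _ => r.2.2.2.2.2.1 h h' n⟩,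
   fun h => ⟨hEc.2.2.2.2.1 h, fun r _ => r.2.2.2.2.2.2.1 h⟩,
   fun n => ⟨hEc.2.2.2.2.2 n, fun r _ => r.2.2.2.2.2.2.2 n⟩⟩

end Lattice

/-- If α is compatible with some admissible H-indexed equivalence relation E,
then α is compatible with the coarse equivalence relation
E_α : n ∼_α^h n' iff ∀ x y, x·h·y = 1 → α(x,n) = α(x,n'); moreover E_α is admissible and is
the largest admissible equivalence relation compatible with α. Consequently the admissible
equivalence relations compatible with the (valid) map α form a complete lattice under
inclusion. -/
theorem coarse_compatible_and_complete_lattice {H N : Type*} [Monoid H] [Monoid N]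
    (α : H → N → N) (e : H → N → N → Prop)
    (hadm : IsAdmissible e) (hcomp : IsCompatibleAction e α) :
    IsAdmissible (fun (h : H) (n n' : N) => ∀ x y : H, x * h * y = 1 → α x n = α x n') ∧
    IsCompatibleAction (fun (h : H) (n n' : N) => ∀ x y : H, x * h * y = 1 → α x n = α x n') α ∧
    -- E_α is the largest admissible equivalence relation compatible with α
    (∀ e' : H → N → N → Prop, IsAdmissible e' → IsCompatibleAction e' α →
      ∀ (h : H) (n n' : N), e' h n n' → ∀ x y : H, x * h * y = 1 → α x n = α x n') ∧
    -- the compatible admissible equivalence relations form a complete lattice under inclusion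
    ∃ inst : CompleteLattice {r : H → N → N → Prop // IsAdmissible r ∧ IsCompatibleAction r α},
      ∀ a b : {r : H → N → N → Prop // IsAdmissible r ∧ IsCompatibleAction r α},
        inst.le a b ↔ ∀ (h : H) (n n' : N), a.1 h n n' → b.1 h n n' := by
  have hE : IsAdmissible (Ecoarse α) := Ecoarse_admissible hadm hcomp
  have hEc : IsCompatibleAction (Ecoarse α) α := Ecoarse_compatible hadm hcomp
  refine ⟨hE, hEc, fun e' hadm' hcomp' h n n' hr => Ecoarse_largest hadm' hcomp' hr, ?_⟩
  letI po : PartialOrder {r : H → N → N → Prop // IsAdmissible r ∧ IsCompatibleAction r α} :=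
    { le := fun a b => ∀ h n n', a.1 h n n' → b.1 h n n'
      le_refl := fun a h n n' => id
      le_trans := fun a b c hab hbc h n n' hr => hbc h n n' (hab h n n' hr)
      le_antisymm := fun a b hab hba => Subtype.ext (funext fun h => funext fun n =>
        funext fun n' => propext ⟨hab h n n', hba h n n'⟩) }
  letI is : InfSet {r : H → N → N → Prop // IsAdmissible r ∧ IsCompatibleAction r α} :=
    ⟨fun S => ⟨fun h n n' => Ecoarse α h n n' ∧ ∀ r ∈ S, r.1 h n n',
      inter_admissible hE S, inter_compatible hEc S⟩⟩
  refine ⟨completeLatticeOfInf _ ?_, fun a b => Iff.rfl⟩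
  intro S
  constructor
  · intro r hrS h n n' hx
    exact hx.2 r hrS
  · intro b hb h n n' hbr
    exact ⟨Ecoarse_largest b.2.1 b.2.2 hbr, fun r hrS => hb hrS h n n' hbr⟩
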